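/- Let f : M → N be a smooth map between smooth manifolds. Then f is a submersion (its differential is surjective at every point of M) if and only if f has the following pointed lifting property: for every natural number k, every open set 𝖴 ⊆ ℝ^k, every point r ∈ 𝖴, every smooth map p : 𝖴 → N, and every x ∈ M with f(x) = p(r), there exist an open neighborhood 𝖴' ⊆ 𝖴 of r and a smooth map q : 𝖴' → M with q(r) = x and f(q(r')) = p(r') for all r' ∈ 𝖴'. -/

import Mathlib

open scoped Manifold Topology
open Set


/-- Local smooth section of a map with surjective derivative, in Euclidean spaces. -/
lemma exists_local_section
    {E F : Type*} [NormedAddCommGroup E] [NormedSpace ℝ E] [FiniteDimensional ℝ E]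
    [NormedAddCommGroup F] [NormedSpace ℝ F] [FiniteDimensional ℝ F]
    {V : Set E} (hV : IsOpen V) {G : E → F} (hG : ContDiffOn ℝ (⊤ : ℕ∞) G V)
    {x₀ : E} (hx₀ : x₀ ∈ V) (hsurj : Function.Surjective (fderiv ℝ G x₀)) :
    ∃ W : Set F, IsOpen W ∧ G x₀ ∈ W ∧ ∃ s : F → E, ContDiffOn ℝ (⊤ : ℕ∞) s W ∧
      s (G x₀) = x₀ ∧ (∀ z ∈ W, s z ∈ V) ∧ ∀ z ∈ W, G (s z) = z := by
  classical
  have hone : (1 : WithTop ℕ∞) ≤ ((⊤ : ℕ∞) : WithTop ℕ∞) := by exact_mod_cast le_top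
  have hne0 : ((⊤ : ℕ∞) : WithTop ℕ∞) ≠ 0 := by simp
  -- right inverse of the derivative
  obtain ⟨A', hA'⟩ := (fderiv ℝ G x₀).toLinearMap.exists_rightInverse_of_surjective
    (LinearMap.range_eq_top.2 hsurj)
  set A : F →L[ℝ] E := A'.toContinuousLinearMap with hA
  have hDA : ∀ z : F, fderiv ℝ G x₀ (A z) = z := fun z => LinearMap.ext_iff.1 hA' z
  -- the auxiliary map H
  set H : F → F := fun y => G (x₀ + A y) with hHdef
  have haff : ContDiff ℝ (⊤ : ℕ∞) (fun y : F => x₀ + A y) :=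
    contDiff_const.add A.contDiff
  set V' : Set F := (fun y : F => x₀ + A y) ⁻¹' V with hV'def
  have hV' : IsOpen V' := hV.preimage haff.continuous
  have h0V' : (0 : F) ∈ V' := by simp [hV'def, hx₀]
  have hH : ContDiffOn ℝ (⊤ : ℕ∞) H V' := hG.comp haff.contDiffOn (mapsTo_preimage _ _)
  -- derivative of H at 0 is the identity
  have hGdiff : DifferentiableAt ℝ G x₀ :=
    ((hG.differentiableOn hne0).differentiableAt (hV.mem_nhds hx₀))
  have haff0 : HasFDerivAt (fun y : F => x₀ + A y) (A : F →L[ℝ] E) 0 :=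
    A.hasFDerivAt.const_add x₀
  have hH0 : HasFDerivAt H ((fderiv ℝ G x₀).comp A) 0 := by
    have h1 : HasFDerivAt G (fderiv ℝ G x₀) ((fun y : F => x₀ + A y) 0) := by
      simpa using hGdiff.hasFDerivAt
    exact h1.comp 0 haff0
  have hcomp_id : (fderiv ℝ G x₀).comp A = ContinuousLinearMap.id ℝ F := by
    ext z; exact hDA z
  have hH0' : HasFDerivAt H ((ContinuousLinearEquiv.refl ℝ F : F ≃L[ℝ] F) : F →L[ℝ] F) 0 := by
    rw [hcomp_id] at hH0; simpa using hH0
  have hHat0 : ContDiffAt ℝ (⊤ : ℕ∞) H 0 := hH.contDiffAt (hV'.mem_nhds h0V')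
  -- inverse function theorem
  set Φ := hHat0.toOpenPartialHomeomorph H hH0' hne0 with hΦdef
  have hΦcoe : (Φ : F → F) = H := rfl
  have h0src : (0 : F) ∈ Φ.source := hHat0.mem_toOpenPartialHomeomorph_source hH0' hne0
  have hH0tgt : H 0 ∈ Φ.target := hHat0.image_mem_toOpenPartialHomeomorph_target hH0' hne0
  -- region of invertibility of the derivative of H
  have hfdHcont : ContinuousOn (fderiv ℝ H) V' :=
    hH.continuousOn_fderiv_of_isOpen hV' hone
  set R : Set F := V' ∩ (fderiv ℝ H) ⁻¹' {u : F →L[ℝ] F | IsUnit u} with hRdef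
  have hRopen : IsOpen R := hfdHcont.isOpen_inter_preimage hV' Units.isOpen
  have h0R : (0 : F) ∈ R := by
    refine ⟨h0V', ?_⟩
    have : fderiv ℝ H 0 = ContinuousLinearMap.id ℝ F := by
      rw [hH0.fderiv, hcomp_id]
    simp only [mem_preimage, this, mem_setOf_eq]
    exact isUnit_one
  -- the good open set
  set S : Set F := Φ.source ∩ R with hSdef
  have hSopen : IsOpen S := Φ.open_source.inter hRopen
  have h0S : (0 : F) ∈ S := ⟨h0src, h0R⟩
  set W : Set F := Φ.target ∩ Φ.symm ⁻¹' S with hWdef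
  have hWopen : IsOpen W := Φ.isOpen_inter_preimage_symm hSopen
  have hΦ0 : Φ.symm (H 0) = 0 := by
    have := Φ.left_inv h0src
    rwa [hΦcoe] at this
  have hGx₀ : G x₀ = H 0 := by simp [hHdef]
  have hGx₀W : G x₀ ∈ W := by
    rw [hGx₀]
    exact ⟨hH0tgt, by rw [mem_preimage, hΦ0]; exact h0S⟩
  -- the section
  refine ⟨W, hWopen, hGx₀W, fun z => x₀ + A (Φ.symm z), ?_, ?_, ?_, ?_⟩
  · -- smoothness
    intro z hz
    obtain ⟨hztgt, hzS⟩ := hz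
    have hy : Φ.symm z ∈ S := hzS
    obtain ⟨hysrc, hyV', hyUnit⟩ := hy
    have hyUnit' : IsUnit (fderiv ℝ H (Φ.symm z)) := hyUnit
    have hHdiff : DifferentiableAt ℝ H (Φ.symm z) :=
      (hH.differentiableOn hne0).differentiableAt (hV'.mem_nhds hyV')
    set e : F ≃L[ℝ] F := ContinuousLinearEquiv.unitsEquiv ℝ F hyUnit'.unit with hedef
    have hecoe : (e : F →L[ℝ] F) = fderiv ℝ H (Φ.symm z) := by
      ext w
      rw [hedef]
      rw [ContinuousLinearEquiv.coe_coe, ContinuousLinearEquiv.unitsEquiv_apply,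
        hyUnit'.unit_spec]
    have hfde : HasFDerivAt H (e : F →L[ℝ] F) (Φ.symm z) := by
      rw [hecoe]; exact hHdiff.hasFDerivAt
    have hsymm : ContDiffAt ℝ (⊤ : ℕ∞) Φ.symm z :=
      Φ.contDiffAt_symm hztgt hfde (hH.contDiffAt (hV'.mem_nhds hyV'))
    exact ((contDiffAt_const.add (A.contDiff.contDiffAt.comp z hsymm))).contDiffWithinAt
  · -- s (G x₀) = x₀
    show x₀ + A (Φ.symm (G x₀)) = x₀
    rw [hGx₀, hΦ0]; simp
  · -- maps to V
    intro z hz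
    exact hz.2.2.1
  · -- section property
    intro z hz
    have h1 : H (Φ.symm z) = z := by
      have := Φ.right_inv hz.1
      rwa [hΦcoe] at this
    exact h1

set_option maxRecDepth 2000 in
/-- A smooth map between manifolds is a submersion if and only if it has the
pointed lifting property for smooth plots (i.e. it is a local subduction). -/
theorem submersion_iff_local_subduction
    {m n : ℕ}
    {M : Type*} [TopologicalSpace M] [ChartedSpace (EuclideanSpace ℝ (Fin m)) M]
    [IsManifold (𝓡 m) (⊤ : ℕ∞) M] [T2Space M] [SecondCountableTopology M]
    {N : Type*} [TopologicalSpace N] [ChartedSpace (EuclideanSpace ℝ (Fin n)) N]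
    [IsManifold (𝓡 n) (⊤ : ℕ∞) N] [T2Space N] [SecondCountableTopology N]
    (f : M → N) (hf : ContMDiff (𝓡 m) (𝓡 n) (⊤ : ℕ∞) f) :
    (∀ x : M, Function.Surjective (mfderiv (𝓡 m) (𝓡 n) f x)) ↔
    (∀ (k : ℕ) (U : Set (EuclideanSpace ℝ (Fin k))) (r : EuclideanSpace ℝ (Fin k))
      (p : EuclideanSpace ℝ (Fin k) → N) (x : M),
      IsOpen U → r ∈ U → ContMDiffOn (𝓡 k) (𝓡 n) (⊤ : ℕ∞) p U → f x = p r →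
      ∃ U' : Set (EuclideanSpace ℝ (Fin k)), U' ⊆ U ∧ IsOpen U' ∧ r ∈ U' ∧
        ∃ q : EuclideanSpace ℝ (Fin k) → M,
          ContMDiffOn (𝓡 k) (𝓡 m) (⊤ : ℕ∞) q U' ∧ q r = x ∧ ∀ r' ∈ U', f (q r') = p r') := by
  constructor
  · -- submersion → lifting
    intro hsurj k U r p x hU hrU hp hfx
    have hxsrc : x ∈ (extChartAt (𝓡 m) x).source := mem_extChartAt_source x
    have hfxsrc : f x ∈ (extChartAt (𝓡 n) (f x)).source := mem_extChartAt_source (f x)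
    -- the map in charts
    set φ := extChartAt (𝓡 m) x with hφdef
    set ψ := extChartAt (𝓡 n) (f x) with hψdef
    set F : EuclideanSpace ℝ (Fin m) → EuclideanSpace ℝ (Fin n) := ↑ψ ∘ f ∘ ↑φ.symm with hFdef
    set V : Set (EuclideanSpace ℝ (Fin m)) :=
      φ.target ∩ ↑φ.symm ⁻¹' (φ.source ∩ f ⁻¹' ψ.source) with hVdef
    have hVopen : IsOpen V :=
      (continuousOn_extChartAt_symm x).isOpen_inter_preimage (isOpen_extChartAt_target x)
        ((isOpen_extChartAt_source x).inter
          ((isOpen_extChartAt_source (f x)).preimage hf.continuous))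
    have hx₀V : φ x ∈ V := by
      refine ⟨φ.map_source hxsrc, ?_⟩
      rw [mem_preimage, φ.left_inv hxsrc]
      exact ⟨hxsrc, hfxsrc⟩
    -- smoothness of F on V
    have hFsm : ContDiffOn ℝ (⊤ : ℕ∞) F V := by
      apply contMDiffOn_iff_contDiffOn.1
      have h1 : ContMDiffOn 𝓘(ℝ, EuclideanSpace ℝ (Fin m)) (𝓡 m) (⊤ : ℕ∞) (↑φ.symm) V :=
        (contMDiffOn_extChartAt_symm x).mono (by rw [hVdef]; exact inter_subset_left)
      have h2 : ContMDiffOn (𝓡 m) (𝓡 n) (⊤ : ℕ∞) f (φ.source ∩ f ⁻¹' ψ.source) :=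
        hf.contMDiffOn
      have h3 : ContMDiffOn (𝓡 n) 𝓘(ℝ, EuclideanSpace ℝ (Fin n)) (⊤ : ℕ∞) (↑ψ) ψ.source := by
        rw [hψdef, extChartAt_source]
        exact contMDiffOn_extChartAt
      exact h3.comp (h2.comp h1 (fun y hy => hy.2)) (fun y hy => hy.2.2)
    -- surjectivity of the derivative of F in charts
    have hd : MDifferentiableAt (𝓡 m) (𝓡 n) f x := (hf x).mdifferentiableAt (by simp)
    have hmf : Function.Surjective (fderiv ℝ F (φ x)) := by
      have heq : mfderiv (𝓡 m) (𝓡 n) f x = fderiv ℝ F (φ x) := by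
        rw [hd.mfderiv, ← fderivWithin_univ]
        congr 1
        exact ModelWithCorners.range_eq_univ (I := 𝓡 m)
      have := hsurj x
      rwa [heq] at this
    obtain ⟨W, hWopen, hFx₀W, s, hssm, hsFx₀, hsV, hGs⟩ :=
      exists_local_section hVopen hFsm hx₀V hmf
    have hFx₀ : F (φ x) = ψ (f x) := by
      simp only [hFdef, Function.comp_apply, φ.left_inv hxsrc]
    -- the open set U'
    set U₁ : Set (EuclideanSpace ℝ (Fin k)) := U ∩ p ⁻¹' ψ.source with hU₁def
    have hU₁open : IsOpen U₁ :=
      hp.continuousOn.isOpen_inter_preimage hU (isOpen_extChartAt_source (f x))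
    set c : EuclideanSpace ℝ (Fin k) → EuclideanSpace ℝ (Fin n) := fun r' => ψ (p r') with hcdef
    have hccont : ContinuousOn c U₁ :=
      (continuousOn_extChartAt (f x)).comp (hp.continuousOn.mono inter_subset_left)
        (fun y hy => hy.2)
    set U' : Set (EuclideanSpace ℝ (Fin k)) := U₁ ∩ c ⁻¹' W with hU'def
    have hU'open : IsOpen U' := hccont.isOpen_inter_preimage hU₁open hWopen
    have hrU' : r ∈ U' := by
      refine ⟨⟨hrU, ?_⟩, ?_⟩
      · rw [mem_preimage, ← hfx]; exact hfxsrc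
      · rw [mem_preimage, hcdef]
        show ψ (p r) ∈ W
        rw [← hfx, ← hFx₀]
        exact hFx₀W
    refine ⟨U', fun y hy => hy.1.1, hU'open, hrU', fun r' => φ.symm (s (c r')), ?_, ?_, ?_⟩
    · -- smoothness of q
      have hcsm : ContMDiffOn (𝓡 k) 𝓘(ℝ, EuclideanSpace ℝ (Fin n)) (⊤ : ℕ∞) c U' := by
        have hψsm : ContMDiffOn (𝓡 n) 𝓘(ℝ, EuclideanSpace ℝ (Fin n)) (⊤ : ℕ∞) (↑ψ) ψ.source := by
          rw [hψdef, extChartAt_source]; exact contMDiffOn_extChartAt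
        exact hψsm.comp (hp.mono (fun y hy => hy.1.1)) (fun y hy => hy.1.2)
      have hssm' : ContMDiffOn 𝓘(ℝ, EuclideanSpace ℝ (Fin n)) 𝓘(ℝ, EuclideanSpace ℝ (Fin m)) (⊤ : ℕ∞) s W :=
        hssm.contMDiffOn
      have hsc : ContMDiffOn (𝓡 k) 𝓘(ℝ, EuclideanSpace ℝ (Fin m)) (⊤ : ℕ∞) (s ∘ c) U' :=
        hssm'.comp hcsm (fun y hy => hy.2)
      exact (contMDiffOn_extChartAt_symm x).comp hsc
        (fun y hy => (hsV _ hy.2).1)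
    · -- q r = x
      show φ.symm (s (c r)) = x
      have : c r = F (φ x) := by
        rw [hcdef]; show ψ (p r) = F (φ x); rw [← hfx, hFx₀]
      rw [this, hsFx₀, φ.left_inv hxsrc]
    · -- f ∘ q = p on U'
      intro r' hr'
      have hz : c r' ∈ W := hr'.2
      have hsVz := hsV _ hz
      have hGsz := hGs _ hz
      -- hGsz : F (s (c r')) = c r', i.e. ψ (f (φ.symm (s (c r')))) = ψ (p r')
      have h1 : f (φ.symm (s (c r'))) ∈ ψ.source := hsVz.2.2
      have h2 : p r' ∈ ψ.source := hr'.1.2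
      apply ψ.injOn h1 h2
      exact hGsz
  · -- lifting → submersion
    intro hlift x
    have hfxsrc : f x ∈ (extChartAt (𝓡 n) (f x)).source := mem_extChartAt_source (f x)
    set ψ := extChartAt (𝓡 n) (f x) with hψdef
    obtain ⟨U', hU'sub, hU'open, hrU', q, hq, hqr, hfq⟩ :=
      hlift n ψ.target (ψ (f x)) (↑ψ.symm) x (isOpen_extChartAt_target (f x))
        (ψ.map_source hfxsrc) (contMDiffOn_extChartAt_symm (f x))
        (by rw [ψ.left_inv hfxsrc])
    set r : EuclideanSpace ℝ (Fin n) := ψ (f x) with hrdef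
    have hqd : MDifferentiableAt 𝓘(ℝ, EuclideanSpace ℝ (Fin n)) (𝓡 m) q r :=
      (((hq r hrU').contMDiffAt (hU'open.mem_nhds hrU')).mdifferentiableAt (by simp))
    have hfd : MDifferentiableAt (𝓡 m) (𝓡 n) f (q r) := (hf (q r)).mdifferentiableAt (by simp)
    -- mfderiv of ψ.symm at r is surjective
    have hψd : MDifferentiableAt (𝓡 n) 𝓘(ℝ, EuclideanSpace ℝ (Fin n)) (↑ψ) (f x) :=
      mdifferentiableAt_extChartAt (by rw [← extChartAt_source (𝓡 n)]; exact hfxsrc)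
    have hψsd : MDifferentiableAt 𝓘(ℝ, EuclideanSpace ℝ (Fin n)) (𝓡 n) (↑ψ.symm) r :=
      (((contMDiffOn_extChartAt_symm (n := (⊤ : ℕ∞)) (f x)) r (ψ.map_source hfxsrc)).contMDiffAt
        ((isOpen_extChartAt_target (f x)).mem_nhds (ψ.map_source hfxsrc))).mdifferentiableAt
        (by simp)
    have hidev : (↑ψ.symm ∘ ↑ψ : N → N) =ᶠ[𝓝 (f x)] id := by
      filter_upwards [(isOpen_extChartAt_source (f x)).mem_nhds hfxsrc] with y hy
      exact ψ.left_inv hy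
    have hcomp1 : mfderiv (𝓡 n) (𝓡 n) (↑ψ.symm ∘ ↑ψ) (f x)
        = (mfderiv 𝓘(ℝ, EuclideanSpace ℝ (Fin n)) (𝓡 n) (↑ψ.symm) r).comp
          (mfderiv (𝓡 n) 𝓘(ℝ, EuclideanSpace ℝ (Fin n)) (↑ψ) (f x)) :=
      mfderiv_comp (f x) hψsd hψd
    have hid : mfderiv (𝓡 n) (𝓡 n) (↑ψ.symm ∘ ↑ψ) (f x)
        = ContinuousLinearMap.id ℝ (TangentSpace (𝓡 n) (f x)) := by
      rw [hidev.mfderiv_eq]; exact mfderiv_id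
    have hψssurj : Function.Surjective
        (mfderiv 𝓘(ℝ, EuclideanSpace ℝ (Fin n)) (𝓡 n) (↑ψ.symm) r) := by
      intro v
      refine ⟨mfderiv (𝓡 n) 𝓘(ℝ, EuclideanSpace ℝ (Fin n)) (↑ψ) (f x) v, ?_⟩
      have := ContinuousLinearMap.ext_iff.1 (hcomp1.symm.trans hid) v
      exact this
    -- f ∘ q = ψ.symm near r
    have hev : (f ∘ q) =ᶠ[𝓝 r] (↑ψ.symm) := by
      filter_upwards [hU'open.mem_nhds hrU'] with y hy
      exact hfq y hy
    have hcomp2 : mfderiv 𝓘(ℝ, EuclideanSpace ℝ (Fin n)) (𝓡 n) (f ∘ q) r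
        = (mfderiv (𝓡 m) (𝓡 n) f (q r)).comp
          (mfderiv 𝓘(ℝ, EuclideanSpace ℝ (Fin n)) (𝓡 m) q r) :=
      mfderiv_comp r hfd hqd
    have hsurjq : Function.Surjective (mfderiv (𝓡 m) (𝓡 n) f (q r)) := by
      have h1 : mfderiv 𝓘(ℝ, EuclideanSpace ℝ (Fin n)) (𝓡 n) (f ∘ q) r
          = mfderiv 𝓘(ℝ, EuclideanSpace ℝ (Fin n)) (𝓡 n) (↑ψ.symm) r := hev.mfderiv_eq
      intro v
      obtain ⟨w, hw⟩ := hψssurj v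
      refine ⟨mfderiv 𝓘(ℝ, EuclideanSpace ℝ (Fin n)) (𝓡 m) q r w, ?_⟩
      have := ContinuousLinearMap.ext_iff.1 (hcomp2.symm.trans h1) w
      simpa using this.trans hw
    rw [← hqr]
    exact hsurjq
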